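/- arXiv:2107.00118 — 6 statements merged into one kernel-verified Lean document; each statement's English description precedes it below -/
import Mathlib

section
/- Let y₁ ≠ y₂ be real numbers and τ > 0, μ ∈ ℝ. Define H_i = (τ² + (y_i−μ)²)^{−3/2}·[[τ², τ(y_i−μ)],[τ(y_i−μ), (y_i−μ)²]] for i = 1,2. Then det(H₁ + H₂) = τ²(y₁−y₂)² / ((τ²+(y₁−μ)²)^{3/2}(τ²+(y₂−μ)²)^{3/2}) > 0; in particular H₁ + H₂ is positive definite. -/
open Matrix in
theorem sum_hessians_posDef (y₁ y₂ τ μ : ℝ) (hy : y₁ ≠ y₂) (hτ : 0 < τ) :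
    let H : ℝ → Matrix (Fin 2) (Fin 2) ℝ := fun y =>
      (τ ^ 2 + (y - μ) ^ 2) ^ (-(3 : ℝ) / 2) •
        !![τ ^ 2, τ * (y - μ); τ * (y - μ), (y - μ) ^ 2]
    (H y₁ + H y₂).det =
        τ ^ 2 * (y₁ - y₂) ^ 2 /
          ((τ ^ 2 + (y₁ - μ) ^ 2) ^ ((3 : ℝ) / 2) *
            (τ ^ 2 + (y₂ - μ) ^ 2) ^ ((3 : ℝ) / 2)) ∧
      0 < (H y₁ + H y₂).det ∧ (H y₁ + H y₂).PosDef := by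
  intro H
  set d₁ := y₁ - μ with hd1
  set d₂ := y₂ - μ with hd2
  have hs1 : (0:ℝ) < τ ^ 2 + d₁ ^ 2 := by positivity
  have hs2 : (0:ℝ) < τ ^ 2 + d₂ ^ 2 := by positivity
  set a := (τ ^ 2 + d₁ ^ 2) ^ (-(3 : ℝ) / 2) with ha
  set b := (τ ^ 2 + d₂ ^ 2) ^ (-(3 : ℝ) / 2) with hb
  have hapos : 0 < a := Real.rpow_pos_of_pos hs1 _
  have hbpos : 0 < b := Real.rpow_pos_of_pos hs2 _
  have hd : d₁ ≠ d₂ := by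
    intro h; apply hy; rw [hd1, hd2] at h; linarith
  have hdet : (H y₁ + H y₂).det = a * b * (τ ^ 2 * (y₁ - y₂) ^ 2) := by
    have hyd : y₁ - y₂ = d₁ - d₂ := by rw [hd1, hd2]; ring
    simp only [H, Matrix.det_fin_two, Matrix.add_apply, Matrix.smul_apply,
      Matrix.cons_val', Matrix.cons_val_zero, Matrix.cons_val_one, Matrix.head_cons,
      Matrix.empty_val', Matrix.cons_val_fin_one, Matrix.head_fin_const, Matrix.of_apply, smul_eq_mul, hyd]
    ring
  have hab : a * b = 1 / ((τ ^ 2 + d₁ ^ 2) ^ ((3 : ℝ) / 2) * (τ ^ 2 + d₂ ^ 2) ^ ((3 : ℝ) / 2)) := by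
    rw [ha, hb]
    rw [show (-(3:ℝ)/2) = -(3/2) by ring, Real.rpow_neg hs1.le, Real.rpow_neg hs2.le]
    field_simp
  have hdeteq : (H y₁ + H y₂).det =
      τ ^ 2 * (y₁ - y₂) ^ 2 /
        ((τ ^ 2 + (y₁ - μ) ^ 2) ^ ((3 : ℝ) / 2) * (τ ^ 2 + (y₂ - μ) ^ 2) ^ ((3 : ℝ) / 2)) := by
    rw [hdet, hab, ← hd1, ← hd2]; ring
  have hdetpos : 0 < (H y₁ + H y₂).det := by
    rw [hdet]
    have : (y₁ - y₂) ≠ 0 := sub_ne_zero.mpr hy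
    positivity
  refine ⟨hdeteq, hdetpos, Matrix.posDef_iff_dotProduct_mulVec.mpr ⟨?_, ?_⟩⟩
  · ext i j
    fin_cases i <;> fin_cases j <;>
      simp [H, Matrix.conjTranspose, Matrix.IsHermitian, Matrix.transpose_apply, Matrix.vecHead, Matrix.vecTail]
  · intro x hx
    have hquad : star x ⬝ᵥ (H y₁ + H y₂) *ᵥ x =
        a * (τ * x 0 + d₁ * x 1) ^ 2 + b * (τ * x 0 + d₂ * x 1) ^ 2 := by
      simp [H, dotProduct, Matrix.mulVec, Fin.sum_univ_two]
      ring
    rw [hquad]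
    rcases eq_or_ne (τ * x 0 + d₁ * x 1) 0 with h1 | h1
    · rcases eq_or_ne (τ * x 0 + d₂ * x 1) 0 with h2 | h2
      · exfalso
        have hx1 : x 1 = 0 := by
          have : (d₁ - d₂) * x 1 = 0 := by linarith
          rcases mul_eq_zero.mp this with h | h
          · exact absurd (sub_eq_zero.mp h) hd
          · exact h
        have hx0 : x 0 = 0 := by
          have : τ * x 0 = 0 := by rw [hx1] at h1; linarith
          exact (mul_eq_zero.mp this).resolve_left hτ.ne'
        apply hx; ext i; fin_cases i <;> assumption
      · have : 0 < b * (τ * x 0 + d₂ * x 1) ^ 2 := by positivity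
        nlinarith [sq_nonneg (τ * x 0 + d₁ * x 1)]
    · have : 0 < a * (τ * x 0 + d₁ * x 1) ^ 2 := by positivity
      nlinarith [sq_nonneg (τ * x 0 + d₂ * x 1)]
end

section
/- Let ε be a real-valued random variable with E[ε] = 0 and E[ε²] = 1, let σ > 0, and let τ* > 0 satisfy E[τ*/√(τ*² + σ²ε²)] = 1 − z²/n for constants 0 < z² < n. Then τ*² ≤ nσ²/(2z²). -/
open MeasureTheory

theorem oracle_tau_upper_bound {Ω : Type*} [MeasurableSpace Ω]
    (μ : Measure Ω) [IsProbabilityMeasure μ] (ε : Ω → ℝ) (hε : Measurable ε)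
    (hint : Integrable ε μ) (hmean : ∫ ω, ε ω ∂μ = 0)
    (hint2 : Integrable (fun ω => (ε ω) ^ 2) μ) (hvar : ∫ ω, (ε ω) ^ 2 ∂μ = 1)
    (σ τs z n : ℝ) (hσ : 0 < σ) (hτ : 0 < τs) (hz : 0 < z ^ 2) (hzn : z ^ 2 < n)
    (horacle : ∫ ω, τs / Real.sqrt (τs ^ 2 + σ ^ 2 * (ε ω) ^ 2) ∂μ = 1 - z ^ 2 / n) :
    τs ^ 2 ≤ n * σ ^ 2 / (2 * z ^ 2) := by
  have hn : 0 < n := lt_trans hz hzn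
  -- pointwise bound
  have key : ∀ ω, 1 - σ ^ 2 * (ε ω) ^ 2 / (2 * τs ^ 2)
      ≤ τs / Real.sqrt (τs ^ 2 + σ ^ 2 * (ε ω) ^ 2) := by
    intro ω
    set x := (ε ω) ^ 2 with hx
    have hx0 : 0 ≤ x := sq_nonneg _
    have hpos : 0 < τs ^ 2 + σ ^ 2 * x := by positivity
    set s := Real.sqrt (τs ^ 2 + σ ^ 2 * x) with hs
    have hs0 : 0 < s := Real.sqrt_pos.mpr hpos
    have hs2 : s ^ 2 = τs ^ 2 + σ ^ 2 * x := Real.sq_sqrt hpos.le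
    rw [le_div_iff₀ hs0]
    rcases le_or_gt (1 - σ ^ 2 * x / (2 * τs ^ 2)) 0 with h | h
    · nlinarith [mul_nonpos_of_nonpos_of_nonneg h hs0.le]
    · have ha : σ ^ 2 * x < 2 * τs ^ 2 := by
        have h2 : σ ^ 2 * x / (2 * τs ^ 2) < 1 := by linarith
        exact (div_lt_one (by positivity)).mp h2
      have heq : 1 - σ ^ 2 * x / (2 * τs ^ 2) = (2 * τs ^ 2 - σ ^ 2 * x) / (2 * τs ^ 2) := by
        field_simp
      rw [heq, div_mul_eq_mul_div, div_le_iff₀ (by positivity)]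
      refine le_of_pow_le_pow_left₀ two_ne_zero (by positivity) ?_
      have hkey : (0:ℝ) ≤ (σ ^ 2 * x) ^ 2 * (3 * τs ^ 2 - σ ^ 2 * x) := by
        apply mul_nonneg (sq_nonneg _); nlinarith
      nlinarith [hs2, hkey, sq_nonneg (σ ^ 2 * x)]
  -- integrability of the oracle integrand
  have hfm : AEStronglyMeasurable (fun ω => τs / Real.sqrt (τs ^ 2 + σ ^ 2 * (ε ω) ^ 2)) μ := by
    apply Measurable.aestronglyMeasurable
    exact (measurable_const.div ((measurable_const.add
      (measurable_const.mul ((hε.pow measurable_const)))).sqrt))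
  have hfint : Integrable (fun ω => τs / Real.sqrt (τs ^ 2 + σ ^ 2 * (ε ω) ^ 2)) μ := by
    apply Integrable.mono' (integrable_const (1 : ℝ)) hfm
    filter_upwards with ω
    have hx0 : (0:ℝ) ≤ σ ^ 2 * (ε ω) ^ 2 := by positivity
    have hpos : 0 < τs ^ 2 + σ ^ 2 * (ε ω) ^ 2 := by positivity
    have h1 : τs ≤ Real.sqrt (τs ^ 2 + σ ^ 2 * (ε ω) ^ 2) := by
      have := Real.sqrt_le_sqrt (show τs ^ 2 ≤ τs ^ 2 + σ ^ 2 * (ε ω) ^ 2 by nlinarith)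
      rwa [Real.sqrt_sq hτ.le] at this
    have hs0 : 0 < Real.sqrt (τs ^ 2 + σ ^ 2 * (ε ω) ^ 2) := Real.sqrt_pos.mpr hpos
    rw [Real.norm_eq_abs, abs_of_nonneg (by positivity)]
    exact div_le_one_of_le₀ h1 hs0.le
  have hgint : Integrable (fun ω => 1 - σ ^ 2 * (ε ω) ^ 2 / (2 * τs ^ 2)) μ := by
    apply (integrable_const (1 : ℝ)).sub
    have := hint2.const_mul (σ ^ 2 / (2 * τs ^ 2))
    apply this.congr
    filter_upwards with ω
    ring
  have hmono : ∫ ω, (1 - σ ^ 2 * (ε ω) ^ 2 / (2 * τs ^ 2)) ∂μ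
      ≤ ∫ ω, τs / Real.sqrt (τs ^ 2 + σ ^ 2 * (ε ω) ^ 2) ∂μ :=
    integral_mono hgint hfint key
  have hcalc : ∫ ω, (1 - σ ^ 2 * (ε ω) ^ 2 / (2 * τs ^ 2)) ∂μ
      = 1 - σ ^ 2 / (2 * τs ^ 2) := by
    rw [integral_sub (integrable_const 1) (by
      have := hint2.const_mul (σ ^ 2 / (2 * τs ^ 2))
      apply this.congr
      filter_upwards with ω
      ring)]
    have : ∫ ω, σ ^ 2 * (ε ω) ^ 2 / (2 * τs ^ 2) ∂μ
        = (σ ^ 2 / (2 * τs ^ 2)) * ∫ ω, (ε ω) ^ 2 ∂μ := by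
      rw [← integral_const_mul]
      congr 1; funext ω; ring
    rw [integral_const, this, hvar]
    simp
  rw [horacle, hcalc] at hmono
  have h1 : z ^ 2 / n ≤ σ ^ 2 / (2 * τs ^ 2) := by linarith
  rw [div_le_div_iff₀ hn (by positivity)] at h1
  rw [le_div_iff₀ (by positivity)]
  nlinarith
end

section
/- Let ε be a real-valued random variable with E[ε] = 0 and E[ε²] = 1, let σ > 0, and let τ* > 0 satisfy E[τ*/√(τ*² + σ²ε²)] = 1 − z²/n with 0 < z² < n. Define σ²_{τ*} = E[σ²ε²·1{σ²ε² ≤ τ*²}]. Then τ*² ≥ n·σ²_{τ*}/(4z²). -/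
open MeasureTheory

set_option maxHeartbeats 800000

lemma key_ptwise (τ x : ℝ) (hτ : 0 < τ) (hx : 0 ≤ x) (hxτ : x ≤ τ ^ 2) :
    x / (4 * τ ^ 2) ≤ 1 - τ / Real.sqrt (τ ^ 2 + x) := by
  set s := Real.sqrt (τ ^ 2 + x) with hs
  have hs2 : s ^ 2 = τ ^ 2 + x := Real.sq_sqrt (by positivity)
  have hsτ : τ ≤ s := by
    rw [hs]
    exact (Real.le_sqrt' hτ).mpr (by linarith)
  have hspos : 0 < s := lt_of_lt_of_le hτ hsτ
  have hApos : (0:ℝ) < 4 * τ ^ 2 - x := by nlinarith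
  have hfact : 0 ≤ 8 * τ ^ 4 - 7 * τ ^ 2 * x + x ^ 2 := by nlinarith
  have hkey : τ * (4 * τ ^ 2) ≤ (4 * τ ^ 2 - x) * s := by
    apply le_of_pow_le_pow_left₀ two_ne_zero (mul_nonneg hApos.le hspos.le)
    nlinarith [mul_nonneg hx hfact, sq_nonneg (4 * τ ^ 2 - x)]
  have h1 : τ / s ≤ (4 * τ ^ 2 - x) / (4 * τ ^ 2) := by
    rw [div_le_div_iff₀ hspos (by positivity)]
    linarith
  have h2 : (4 * τ ^ 2 - x) / (4 * τ ^ 2) = 1 - x / (4 * τ ^ 2) := by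
    field_simp
  linarith [h1.trans_eq h2]

theorem oracle_tau_lower_bound {Ω : Type*} [MeasurableSpace Ω]
    (μ : Measure Ω) [IsProbabilityMeasure μ] (ε : Ω → ℝ) (hε : Measurable ε)
    (hint : Integrable ε μ) (hmean : ∫ ω, ε ω ∂μ = 0)
    (hint2 : Integrable (fun ω => (ε ω) ^ 2) μ) (hvar : ∫ ω, (ε ω) ^ 2 ∂μ = 1)
    (σ τs z n : ℝ) (hσ : 0 < σ) (hτ : 0 < τs) (hz : 0 < z ^ 2) (hzn : z ^ 2 < n)
    (horacle : ∫ ω, τs / Real.sqrt (τs ^ 2 + σ ^ 2 * (ε ω) ^ 2) ∂μ = 1 - z ^ 2 / n) :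
    τs ^ 2 ≥ n * (∫ ω, if σ ^ 2 * (ε ω) ^ 2 ≤ τs ^ 2 then σ ^ 2 * (ε ω) ^ 2 else 0 ∂μ)
        / (4 * z ^ 2) := by
  have hn : 0 < n := lt_trans hz hzn
  set h : Ω → ℝ := fun ω => τs / Real.sqrt (τs ^ 2 + σ ^ 2 * (ε ω) ^ 2) with hh
  set g : Ω → ℝ := fun ω => if σ ^ 2 * (ε ω) ^ 2 ≤ τs ^ 2 then σ ^ 2 * (ε ω) ^ 2 else 0
    with hg
  -- bounds on h
  have hbound : ∀ ω, 0 ≤ h ω ∧ h ω ≤ 1 := by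
    intro ω
    have h1 : (0:ℝ) < Real.sqrt (τs ^ 2 + σ ^ 2 * (ε ω) ^ 2) := by
      apply Real.sqrt_pos.mpr; positivity
    constructor
    · show 0 ≤ τs / Real.sqrt (τs ^ 2 + σ ^ 2 * (ε ω) ^ 2)
      positivity
    · show τs / Real.sqrt (τs ^ 2 + σ ^ 2 * (ε ω) ^ 2) ≤ 1
      rw [div_le_one h1]
      exact (Real.le_sqrt' hτ).mpr (by nlinarith [sq_nonneg (σ * ε ω)])
  have hmeas : Measurable h := by
    apply Measurable.div measurable_const
    exact Real.continuous_sqrt.measurable.comp (by measurability)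
  have hinth : Integrable h μ := by
    apply Integrable.mono' (integrable_const (1:ℝ)) hmeas.aestronglyMeasurable
    filter_upwards with ω
    rw [Real.norm_eq_abs, abs_of_nonneg (hbound ω).1]
    exact (hbound ω).2
  have hintg : Integrable g μ := by
    apply Integrable.mono' (integrable_const (τs ^ 2)) ?_
    · filter_upwards with ω
      by_cases hcase : σ ^ 2 * (ε ω) ^ 2 ≤ τs ^ 2
      · simp only [hg, if_pos hcase, Real.norm_eq_abs, abs_of_nonneg (by positivity : (0:ℝ) ≤ σ ^ 2 * (ε ω) ^ 2)]
        exact hcase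
      · simp only [hg, if_neg hcase, norm_zero]
        positivity
    · apply Measurable.aestronglyMeasurable
      apply Measurable.ite ?_ (by measurability) measurable_const
      exact measurableSet_le (by measurability) measurable_const
  -- pointwise: g ω ≤ 4τ² * (1 - h ω)
  have hpt : ∀ ω, g ω ≤ 4 * τs ^ 2 * (1 - h ω) := by
    intro ω
    by_cases hcase : σ ^ 2 * (ε ω) ^ 2 ≤ τs ^ 2
    · have := key_ptwise τs (σ ^ 2 * (ε ω) ^ 2) hτ (by positivity) hcase
      rw [div_le_iff₀ (by positivity)] at this
      simp only [hg, hh, if_pos hcase]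
      linarith
    · simp only [hg, hh, if_neg hcase]
      nlinarith [(hbound ω).2, sq_nonneg τs]
  have hI : ∫ ω, g ω ∂μ ≤ 4 * τs ^ 2 * (z ^ 2 / n) := by
    calc ∫ ω, g ω ∂μ ≤ ∫ ω, 4 * τs ^ 2 * (1 - h ω) ∂μ := by
          apply integral_mono hintg ((integrable_const (1:ℝ)).sub hinth |>.const_mul _) hpt
      _ = 4 * τs ^ 2 * (1 - ∫ ω, h ω ∂μ) := by
          rw [integral_const_mul, integral_sub (integrable_const 1) hinth,
            integral_const]
          simp
      _ = 4 * τs ^ 2 * (z ^ 2 / n) := by rw [horacle]; ring_nf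
  rw [ge_iff_le, div_le_iff₀ (by linarith : (0:ℝ) < 4 * z ^ 2)]
  calc n * ∫ ω, g ω ∂μ ≤ n * (4 * τs ^ 2 * (z ^ 2 / n)) :=
        mul_le_mul_of_nonneg_left hI hn.le
    _ = τs ^ 2 * (4 * z ^ 2) := by field_simp
end

section
/- Let ε be a random variable with E[ε] = 0, E[ε²] = 1, and let σ, τ > 0. Then |E[τσε/√(τ² + σ²ε²)]| ≤ σ²/(2τ). -/
open MeasureTheory

lemma key_pointwise (τ : ℝ) (hτ : 0 < τ) (y : ℝ) :
    |τ * y / Real.sqrt (τ ^ 2 + y ^ 2) - y| ≤ y ^ 2 / (2 * τ) := by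
  set s := Real.sqrt (τ ^ 2 + y ^ 2) with hs
  have hs2 : s ^ 2 = τ ^ 2 + y ^ 2 := Real.sq_sqrt (by positivity)
  have hsnn : 0 ≤ s := Real.sqrt_nonneg _
  have hsτ : τ ≤ s := by nlinarith
  have hspos : 0 < s := lt_of_lt_of_le hτ hsτ
  have hsy : |y| ≤ s := by nlinarith [abs_nonneg y, sq_abs y]
  have heq : τ * y / s - y = y * (τ - s) / s := by field_simp
  rw [heq, abs_div, abs_of_pos hspos, abs_mul]
  rw [div_le_div_iff₀ hspos (by positivity)]
  have habs : |τ - s| = s - τ := by rw [abs_sub_comm]; exact abs_of_nonneg (by linarith)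
  rw [habs]
  nlinarith [sq_abs y, abs_nonneg y, mul_nonneg (abs_nonneg y) (sub_nonneg.mpr hsτ),
    mul_le_mul_of_nonneg_left hsy (abs_nonneg y)]

theorem score_bias_bound {Ω : Type*} [MeasurableSpace Ω]
    (μ : Measure Ω) [IsProbabilityMeasure μ] (ε : Ω → ℝ) (hε : Measurable ε)
    (hint : Integrable ε μ) (hmean : ∫ ω, ε ω ∂μ = 0)
    (hint2 : Integrable (fun ω => (ε ω) ^ 2) μ) (hvar : ∫ ω, (ε ω) ^ 2 ∂μ = 1)
    (σ τ : ℝ) (hσ : 0 < σ) (hτ : 0 < τ) :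
    |∫ ω, τ * σ * ε ω / Real.sqrt (τ ^ 2 + σ ^ 2 * (ε ω) ^ 2) ∂μ| ≤
      σ ^ 2 / (2 * τ) := by
  set g : Ω → ℝ := fun ω => τ * σ * ε ω / Real.sqrt (τ ^ 2 + σ ^ 2 * (ε ω) ^ 2) with hg
  have hpt : ∀ ω, |g ω - σ * ε ω| ≤ σ ^ 2 * (ε ω) ^ 2 / (2 * τ) := by
    intro ω
    have := key_pointwise τ hτ (σ * ε ω)
    have h1 : τ * σ * ε ω = τ * (σ * ε ω) := by ring
    have h2 : σ ^ 2 * (ε ω) ^ 2 = (σ * ε ω) ^ 2 := by ring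
    rw [hg]
    simp only [h1, h2]
    convert this using 4 <;> ring
  have hmeas : Measurable g := by
    apply Measurable.div
    · exact (hε.const_mul _)
    · exact (measurable_const.add ((hε.pow_const 2).const_mul _)).sqrt
  have hbound_int : Integrable (fun ω => σ ^ 2 * (ε ω) ^ 2 / (2 * τ)) μ :=
    (hint2.const_mul (σ ^ 2)).div_const (2 * τ)
  have hdiff : Integrable (fun ω => g ω - σ * ε ω) μ := by
    apply Integrable.mono' hbound_int
    · exact (hmeas.sub (hε.const_mul σ)).aestronglyMeasurable
    · filter_upwards with ω
      simpa using hpt ω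
  have hgint : Integrable g μ := by
    have h := hdiff.add (hint.const_mul σ)
    have he : ((fun ω => g ω - σ * ε ω) + fun x => σ * ε x) = g := by
      funext ω
      simp
    rwa [he] at h
  have hσε : ∫ ω, σ * ε ω ∂μ = 0 := by
    rw [integral_const_mul, hmean, mul_zero]
  have h0 : ∫ ω, g ω ∂μ = ∫ ω, (g ω - σ * ε ω) ∂μ := by
    rw [integral_sub hgint (hint.const_mul σ), hσε, sub_zero]
  calc |∫ ω, g ω ∂μ| = |∫ ω, (g ω - σ * ε ω) ∂μ| := by rw [h0]
    _ ≤ ∫ ω, |g ω - σ * ε ω| ∂μ := by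
        simpa using norm_integral_le_integral_norm (fun ω => g ω - σ * ε ω) (μ := μ)
    _ ≤ ∫ ω, σ ^ 2 * (ε ω) ^ 2 / (2 * τ) ∂μ := by
        apply integral_mono hdiff.abs hbound_int
        exact hpt
    _ = σ ^ 2 / (2 * τ) := by
        rw [integral_div, integral_const_mul, hvar, mul_one]
end

section
/- For all real x, w > 0, and τ > 0, |x/√(w² + x²) − x/√(τ² + x²)| ≤ |w − τ| / (2·min(w, τ)). -/
theorem score_lipschitz_in_tau (x w τ : ℝ) (hw : 0 < w) (hτ : 0 < τ) :
    |x / Real.sqrt (w ^ 2 + x ^ 2) - x / Real.sqrt (τ ^ 2 + x ^ 2)| ≤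
      |w - τ| / (2 * min w τ) := by
  wlog h : w ≤ τ with H
  · have h2 := H x τ w hτ hw (le_of_lt (not_le.mp h))
    rw [abs_sub_comm (x / Real.sqrt (τ ^ 2 + x ^ 2)), abs_sub_comm τ w, min_comm] at h2
    exact h2
  rw [min_eq_left h]
  have hApos : (0:ℝ) < w ^ 2 + x ^ 2 := by positivity
  have hBpos : (0:ℝ) < τ ^ 2 + x ^ 2 := by positivity
  set a := Real.sqrt (w ^ 2 + x ^ 2) with ha_def
  set b := Real.sqrt (τ ^ 2 + x ^ 2) with hb_def
  have ha : 0 < a := Real.sqrt_pos.mpr hApos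
  have hb : 0 < b := Real.sqrt_pos.mpr hBpos
  have ha2 : a ^ 2 = w ^ 2 + x ^ 2 := Real.sq_sqrt hApos.le
  have hb2 : b ^ 2 = τ ^ 2 + x ^ 2 := Real.sq_sqrt hBpos.le
  have hax : |x| ≤ a := by
    rw [← Real.sqrt_sq_eq_abs]
    exact Real.sqrt_le_sqrt (by nlinarith)
  have haw : w ≤ a := by
    rw [← Real.sqrt_sq hw.le]
    exact Real.sqrt_le_sqrt (by nlinarith)
  have hbt : τ ≤ b := by
    rw [← Real.sqrt_sq hτ.le]
    exact Real.sqrt_le_sqrt (by nlinarith)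
  have hab : a ≤ b := Real.sqrt_le_sqrt (by nlinarith)
  have heq : x / a - x / b = x * ((τ - w) * (τ + w)) / (a * b * (a + b)) := by
    rw [div_sub_div _ _ ha.ne' hb.ne', div_eq_div_iff (by positivity) (by positivity)]
    linear_combination x * a * b * hb2 - x * a * b * ha2
  rw [heq, abs_div, abs_of_pos (show (0:ℝ) < a * b * (a + b) by positivity),
    abs_mul, abs_of_nonneg (show (0:ℝ) ≤ (τ - w) * (τ + w) by nlinarith),
    abs_of_nonpos (by linarith : w - τ ≤ 0)]
  rw [div_le_div_iff₀ (by positivity) (by positivity)]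
  have key : 2 * w * |x| ≤ a * b := by
    nlinarith [sq_nonneg (w - |x|), sq_abs x, mul_le_mul_of_nonneg_left hab ha.le]
  nlinarith [abs_nonneg x, mul_nonneg (abs_nonneg x) (sub_nonneg.mpr h),
    mul_le_mul_of_nonneg_right key (show (0:ℝ) ≤ τ - w by linarith),
    mul_le_mul_of_nonneg_left (show w + τ ≤ a + b by linarith)
      (show (0:ℝ) ≤ a * b by positivity)]
end

section
/- Let Z₁, …, Z_n be independent real random variables with Σᵢ E[Zᵢ²] ≤ v and Σᵢ E[|Zᵢ|^k] ≤ (k!/2)·v·c^{k−2} for all integers k ≥ 3. Then for S_n = Σᵢ (Zᵢ − E[Zᵢ]) and every t ≥ 0, P(|S_n| ≥ √(2vt) + c·t) ≤ 2e^{−t}. -/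
open MeasureTheory ProbabilityTheory

lemma my_exp_eq_tsum (x : ℝ) : Real.exp x = ∑' n : ℕ, x ^ n / n.factorial := by
  rw [Real.exp_eq_exp_ℝ, NormedSpace.exp_eq_tsum_div]

lemma my_exp_sub_eq (r : ℝ) :
    Real.exp r - 1 - r = ∑' k : ℕ, r ^ (k + 2) / (k + 2).factorial := by
  have hs : Summable fun n : ℕ => r ^ n / n.factorial := Real.summable_pow_div_factorial r
  have hs1 : Summable fun n : ℕ => r ^ (n + 1) / (n + 1).factorial :=
    (summable_nat_add_iff 1).mpr hs
  have h0 := my_exp_eq_tsum r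
  rw [Summable.tsum_eq_zero_add hs, Summable.tsum_eq_zero_add hs1] at h0
  simp only [pow_zero, Nat.factorial_zero, pow_one, Nat.factorial_one, Nat.cast_one] at h0
  have : ∀ k : ℕ, r ^ (k + 1 + 1) / ((k + 1 + 1).factorial : ℝ)
      = r ^ (k + 2) / ((k + 2).factorial : ℝ) := fun k => rfl
  simp only [this] at h0
  norm_num at h0
  linarith [h0]

lemma my_exp_le (x : ℝ) : Real.exp x ≤ 1 + x + (Real.exp |x| - 1 - |x|) := by
  rcases le_or_gt 0 x with h | h
  · rw [abs_of_nonneg h]; ring_nf; exact le_refl _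
  · rw [abs_of_neg h]
    have hsinh : Real.sinh x < x := (Real.sinh_lt_self_iff).mpr h
    have := Real.sinh_eq x
    nlinarith [this, hsinh]

lemma bern_alg (v c t s : ℝ) (hs2 : v * s ^ 2 = 2 * t) (hD : (0:ℝ) < 1 + c * s) :
    -(s / (1 + c * s)) * (v * s + c * t) + v / 2 * (s / (1 + c * s)) ^ 2 * (1 + c * s) = -t := by
  field_simp
  rw [div_eq_iff (ne_of_gt (by linarith [mul_comm s c]))]
  linear_combination -hs2

lemma bernstein_one_sided {Ω : Type*} [MeasurableSpace Ω]
    (μ : Measure Ω) [IsProbabilityMeasure μ] (n : ℕ) (Z : Fin n → Ω → ℝ)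
    (hmeas : ∀ i, Measurable (Z i))
    (hindep : iIndepFun Z μ)
    (hint : ∀ i k, Integrable (fun ω => |Z i ω| ^ k) μ)
    (v c : ℝ) (hv : 0 < v) (hc : 0 < c)
    (hv2 : ∑ i, ∫ ω, (Z i ω) ^ 2 ∂μ ≤ v)
    (hmom : ∀ k : ℕ, 3 ≤ k →
      ∑ i, ∫ ω, |Z i ω| ^ k ∂μ ≤ (Nat.factorial k : ℝ) / 2 * v * c ^ (k - 2))
    (t : ℝ) (ht : 0 ≤ t) :
    μ {ω | Real.sqrt (2 * v * t) + c * t ≤ ∑ i, (Z i ω - ∫ ω', Z i ω' ∂μ)} ≤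
      ENNReal.ofReal (Real.exp (-t)) := by
  classical
  set s : ℝ := Real.sqrt (2 * t / v) with hs_def
  have hs0 : 0 ≤ s := Real.sqrt_nonneg _
  have hs2 : v * s ^ 2 = 2 * t := by
    rw [hs_def, Real.sq_sqrt (by positivity)]; field_simp
  have hD : (0:ℝ) < 1 + c * s := by positivity
  set lam : ℝ := s / (1 + c * s) with hlam_def
  have hlam0 : 0 ≤ lam := by positivity
  have hlamc : lam * c < 1 := by
    rw [hlam_def, div_mul_eq_mul_div, div_lt_one hD]; nlinarith
  have hlamc0 : 0 ≤ lam * c := by positivity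
  -- moments
  set M : Fin n → ℕ → ℝ := fun i k => ∫ ω, |Z i ω| ^ k ∂μ with hM_def
  have hM0 : ∀ i k, 0 ≤ M i k := fun i k => integral_nonneg fun ω => by positivity
  have hMsum : ∀ k : ℕ, 2 ≤ k → ∑ i, M i k ≤ (k.factorial : ℝ) / 2 * v * c ^ (k - 2) := by
    intro k hk
    rcases eq_or_lt_of_le hk with hk2 | hk3
    · rw [← hk2]
      calc ∑ i, M i 2 = ∑ i, ∫ ω, (Z i ω) ^ 2 ∂μ := by
            refine Finset.sum_congr rfl fun i _ => ?_
            simp only [hM_def, sq_abs]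
        _ ≤ v := hv2
        _ = ((2:ℕ).factorial : ℝ) / 2 * v * c ^ (2 - 2) := by norm_num [Nat.factorial]
    · exact hmom k hk3
  have hMi : ∀ i, ∀ k : ℕ, 2 ≤ k → M i k ≤ (k.factorial : ℝ) / 2 * v * c ^ (k - 2) := by
    intro i k hk
    refine le_trans ?_ (hMsum k hk)
    exact Finset.single_le_sum (fun j _ => hM0 j k) (Finset.mem_univ i)
  -- the series
  set g : Fin n → ℕ → ℝ := fun i k => lam ^ (k + 2) * M i (k + 2) / (k + 2).factorial
    with hg_def
  have hg0 : ∀ i k, 0 ≤ g i k := fun i k =>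
    div_nonneg (mul_nonneg (pow_nonneg hlam0 _) (hM0 i _)) (Nat.cast_nonneg _)
  set bnd : ℕ → ℝ := fun k => v / 2 * lam ^ 2 * (lam * c) ^ k with hbnd_def
  have hbnd_sum : Summable bnd :=
    ((summable_geometric_of_lt_one hlamc0 hlamc).mul_left _)
  have hfac_ne : ∀ k : ℕ, ((k + 2).factorial : ℝ) ≠ 0 :=
    fun k => Nat.cast_ne_zero.mpr (Nat.factorial_ne_zero _)
  have hg_le : ∀ k, ∑ i, g i k ≤ bnd k := by
    intro k
    have h1 : ∑ i, g i k = lam ^ (k + 2) / (k + 2).factorial * ∑ i, M i (k + 2) := by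
      rw [Finset.mul_sum]
      refine Finset.sum_congr rfl fun i _ => ?_
      simp only [hg_def]; ring
    rw [h1]
    have h2 : ∑ i, M i (k + 2) ≤ ((k + 2).factorial : ℝ) / 2 * v * c ^ k := by
      have := hMsum (k + 2) (by omega)
      simpa using this
    have h3 : 0 ≤ lam ^ (k + 2) / ((k + 2).factorial : ℝ) := by positivity
    calc lam ^ (k + 2) / (k + 2).factorial * ∑ i, M i (k + 2)
        ≤ lam ^ (k + 2) / (k + 2).factorial * (((k + 2).factorial : ℝ) / 2 * v * c ^ k) :=
          mul_le_mul_of_nonneg_left h2 h3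
      _ = bnd k := by
          simp only [hbnd_def]
          field_simp
          ring
  have hgi_le : ∀ i k, g i k ≤ bnd k := fun i k =>
    le_trans (Finset.single_le_sum (fun j _ => hg0 j k) (Finset.mem_univ i)) (hg_le k)
  have hg_sum : ∀ i, Summable (g i) := fun i =>
    Summable.of_nonneg_of_le (hg0 i) (fun k => hgi_le i k) hbnd_sum
  have hfull : ∀ i, Summable (fun k => lam ^ k * M i k / k.factorial) := by
    intro i
    exact (summable_nat_add_iff 2).mp (hg_sum i)
  -- integrability of exp (lam * |Z i|)
  have hIk : ∀ i k, Integrable (fun ω => (lam * |Z i ω|) ^ k / k.factorial) μ := by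
    intro i k
    have h := (hint i k).const_mul (lam ^ k / (k.factorial : ℝ))
    refine h.congr (Filter.Eventually.of_forall fun ω => ?_)
    simp only [mul_pow]; ring
  have hIk_int : ∀ i k, ∫ ω, (lam * |Z i ω|) ^ k / k.factorial ∂μ
      = lam ^ k * M i k / k.factorial := by
    intro i k
    have h1 : ∀ ω, (lam * |Z i ω|) ^ k / (k.factorial : ℝ)
        = lam ^ k / (k.factorial : ℝ) * |Z i ω| ^ k := fun ω => by rw [mul_pow]; ring
    simp_rw [h1]
    rw [integral_const_mul]
    simp only [hM_def]; ring
  have hIntExp : ∀ i, Integrable (fun ω => Real.exp (lam * |Z i ω|)) μ := by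
    intro i
    have hmeasE : Measurable fun ω => Real.exp (lam * |Z i ω|) :=
      ((hmeas i).abs.const_mul lam).exp
    refine ⟨hmeasE.aestronglyMeasurable, ?_⟩
    rw [hasFiniteIntegral_iff_ofReal (Filter.Eventually.of_forall fun ω => (Real.exp_pos _).le)]
    have hptw : ∀ ω, ENNReal.ofReal (Real.exp (lam * |Z i ω|))
        = ∑' k : ℕ, ENNReal.ofReal ((lam * |Z i ω|) ^ k / k.factorial) := by
      intro ω
      rw [my_exp_eq_tsum]
      exact ENNReal.ofReal_tsum_of_nonneg (fun k => by positivity)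
        (Real.summable_pow_div_factorial _)
    calc ∫⁻ ω, ENNReal.ofReal (Real.exp (lam * |Z i ω|)) ∂μ
        = ∫⁻ ω, ∑' k : ℕ, ENNReal.ofReal ((lam * |Z i ω|) ^ k / k.factorial) ∂μ :=
          lintegral_congr fun ω => hptw ω
      _ = ∑' k : ℕ, ∫⁻ ω, ENNReal.ofReal ((lam * |Z i ω|) ^ k / k.factorial) ∂μ :=
          lintegral_tsum fun k =>
            ((((hmeas i).abs.const_mul lam).pow_const k).div_const _).ennreal_ofReal.aemeasurable
      _ = ∑' k : ℕ, ENNReal.ofReal (lam ^ k * M i k / k.factorial) := by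
          refine tsum_congr fun k => ?_
          rw [← ofReal_integral_eq_lintegral_ofReal (hIk i k)
            (Filter.Eventually.of_forall fun ω => by positivity), hIk_int i k]
      _ = ENNReal.ofReal (∑' k : ℕ, lam ^ k * M i k / k.factorial) :=
          (ENNReal.ofReal_tsum_of_nonneg (fun k => by
            have := hM0 i k; positivity) (hfull i)).symm
      _ < ⊤ := ENNReal.ofReal_lt_top
  have hExpZ : ∀ i, Integrable (fun ω => Real.exp (lam * Z i ω)) μ := by
    intro i
    refine (hIntExp i).mono' (((hmeas i).const_mul lam).exp).aestronglyMeasurable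
      (Filter.Eventually.of_forall fun ω => ?_)
    rw [Real.norm_eq_abs, abs_of_pos (Real.exp_pos _)]
    exact Real.exp_le_exp.mpr (mul_le_mul_of_nonneg_left (le_abs_self _) hlam0)
  have hZ1 : ∀ i, Integrable (Z i) μ := by
    intro i
    refine (hint i 1).mono' (hmeas i).aestronglyMeasurable
      (Filter.Eventually.of_forall fun ω => ?_)
    simp [Real.norm_eq_abs]
  have hAbs1 : ∀ i, Integrable (fun ω => lam * |Z i ω|) μ := by
    intro i
    have := (hint i 1).const_mul lam
    simpa using this
  -- integral identity for the remainder term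
  set R : Fin n → ℝ := fun i => ∑' k, g i k with hR_def
  have hR0 : ∀ i, 0 ≤ R i := fun i => tsum_nonneg (hg0 i)
  have hSubInt : ∀ i, Integrable
      (fun ω => Real.exp (lam * |Z i ω|) - 1 - lam * |Z i ω|) μ := fun i =>
    ((hIntExp i).sub (integrable_const 1)).sub (hAbs1 i)
  have hIntEq : ∀ i, ∫ ω, (Real.exp (lam * |Z i ω|) - 1 - lam * |Z i ω|) ∂μ = R i := by
    intro i
    have hF_int : ∀ k : ℕ, Integrable
        (fun ω => lam ^ (k + 2) * |Z i ω| ^ (k + 2) / (k + 2).factorial) μ := by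
      intro k
      have h := (hint i (k + 2)).const_mul (lam ^ (k + 2) / ((k + 2).factorial : ℝ))
      refine h.congr (Filter.Eventually.of_forall fun ω => ?_)
      simp only []; ring
    have hF_val : ∀ k : ℕ,
        ∫ ω, lam ^ (k + 2) * |Z i ω| ^ (k + 2) / (k + 2).factorial ∂μ = g i k := by
      intro k
      have h1 : ∀ ω, lam ^ (k + 2) * |Z i ω| ^ (k + 2) / ((k + 2).factorial : ℝ)
          = lam ^ (k + 2) / ((k + 2).factorial : ℝ) * |Z i ω| ^ (k + 2) := fun ω => by ring
      simp_rw [h1]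
      rw [integral_const_mul]
      simp only [hg_def, hM_def]; ring
    have hF_sum : Summable fun k : ℕ =>
        ∫ ω, ‖lam ^ (k + 2) * |Z i ω| ^ (k + 2) / ((k + 2).factorial : ℝ)‖ ∂μ := by
      have : ∀ k : ℕ, (∫ ω, ‖lam ^ (k + 2) * |Z i ω| ^ (k + 2) / ((k + 2).factorial : ℝ)‖ ∂μ)
          = g i k := by
        intro k
        rw [← hF_val k]
        refine integral_congr_ae (Filter.Eventually.of_forall fun ω => ?_)
        simp only [Real.norm_eq_abs]
        rw [abs_of_nonneg (by positivity)]
      simp_rw [this]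
      exact hg_sum i
    have heq : ∀ ω, Real.exp (lam * |Z i ω|) - 1 - lam * |Z i ω|
        = ∑' k : ℕ, lam ^ (k + 2) * |Z i ω| ^ (k + 2) / (k + 2).factorial := by
      intro ω
      rw [my_exp_sub_eq]
      exact tsum_congr fun k => by rw [mul_pow]
    calc ∫ ω, (Real.exp (lam * |Z i ω|) - 1 - lam * |Z i ω|) ∂μ
        = ∫ ω, ∑' k : ℕ, lam ^ (k + 2) * |Z i ω| ^ (k + 2) / (k + 2).factorial ∂μ :=
          integral_congr_ae (Filter.Eventually.of_forall fun ω => heq ω)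
      _ = ∑' k : ℕ, ∫ ω, lam ^ (k + 2) * |Z i ω| ^ (k + 2) / (k + 2).factorial ∂μ :=
          (integral_tsum_of_summable_integral_norm hF_int hF_sum).symm
      _ = R i := by rw [hR_def]; exact tsum_congr fun k => hF_val k
  -- mgf bound for each centered variable
  have hmgf : ∀ i, mgf (fun ω => Z i ω - ∫ ω', Z i ω' ∂μ) μ lam ≤ Real.exp (R i) := by
    intro i
    set mi : ℝ := ∫ ω', Z i ω' ∂μ with hmi_def
    have heq : ∀ ω, Real.exp (lam * (Z i ω - mi))
        = Real.exp (lam * Z i ω) * Real.exp (-(lam * mi)) := by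
      intro ω; rw [← Real.exp_add]; ring_nf
    have h1 : ∫ ω, Real.exp (lam * Z i ω) ∂μ ≤ 1 + lam * mi + R i := by
      have hrhs : Integrable (fun ω => 1 + lam * Z i ω
          + (Real.exp (lam * |Z i ω|) - 1 - lam * |Z i ω|)) μ :=
        ((integrable_const 1).add ((hZ1 i).const_mul lam)).add (hSubInt i)
      have hle : ∀ ω, Real.exp (lam * Z i ω) ≤ 1 + lam * Z i ω
          + (Real.exp (lam * |Z i ω|) - 1 - lam * |Z i ω|) := by
        intro ω
        have h := my_exp_le (lam * Z i ω)
        rwa [abs_mul, abs_of_nonneg hlam0] at h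
      calc ∫ ω, Real.exp (lam * Z i ω) ∂μ
          ≤ ∫ ω, (1 + lam * Z i ω + (Real.exp (lam * |Z i ω|) - 1 - lam * |Z i ω|)) ∂μ :=
            integral_mono (hExpZ i) hrhs hle
        _ = 1 + lam * mi + R i := by
            have hadd : Integrable (fun ω => (1:ℝ) + lam * Z i ω) μ :=
              (integrable_const 1).add ((hZ1 i).const_mul lam)
            have hc1 : Integrable (fun _ : Ω => (1:ℝ)) μ := integrable_const 1
            have hcz : Integrable (fun ω => lam * Z i ω) μ := (hZ1 i).const_mul lam
            rw [integral_add hadd (hSubInt i), integral_add hc1 hcz,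
              integral_const, integral_const_mul, hIntEq i]
            simp [hmi_def]
    have h2 : ∫ ω, Real.exp (lam * Z i ω) ∂μ ≤ Real.exp (lam * mi + R i) := by
      refine h1.trans ?_
      have := Real.add_one_le_exp (lam * mi + R i)
      linarith
    have hmgf_eq : mgf (fun ω => Z i ω - mi) μ lam
        = (∫ ω, Real.exp (lam * Z i ω) ∂μ) * Real.exp (-(lam * mi)) := by
      rw [mgf]
      simp_rw [heq]
      rw [integral_mul_const]
    rw [hmgf_eq]
    calc (∫ ω, Real.exp (lam * Z i ω) ∂μ) * Real.exp (-(lam * mi))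
        ≤ Real.exp (lam * mi + R i) * Real.exp (-(lam * mi)) :=
          mul_le_mul_of_nonneg_right h2 (Real.exp_pos _).le
      _ = Real.exp (R i) := by rw [← Real.exp_add]; ring_nf
  -- the centered sum
  set Y : Fin n → Ω → ℝ := fun i ω => Z i ω - ∫ ω', Z i ω' ∂μ with hY_def
  have hYmeas : ∀ i, Measurable (Y i) := fun i => (hmeas i).sub_const _
  have hYindep : iIndepFun Y μ :=
    hindep.comp (fun i x => x - ∫ ω', Z i ω' ∂μ) fun i => measurable_id.sub_const _
  have hYexp : ∀ i, Integrable (fun ω => Real.exp (lam * Y i ω)) μ := by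
    intro i
    have h := (hExpZ i).mul_const (Real.exp (-(lam * ∫ ω', Z i ω' ∂μ)))
    refine h.congr (Filter.Eventually.of_forall fun ω => ?_)
    simp only [hY_def, ← Real.exp_add]
    ring_nf
  have hSexp : Integrable (fun ω => Real.exp (lam * (∑ i, Y i) ω)) μ :=
    hYindep.integrable_exp_mul_sum hYmeas fun i _ => hYexp i
  -- sum of the remainders
  have hRsum : ∑ i, R i ≤ v / 2 * lam ^ 2 * (1 + c * s) := by
    have hswap : ∑ i, R i = ∑' k, ∑ i, g i k := by
      rw [hR_def]
      exact (Summable.tsum_finsetSum fun i _ => hg_sum i).symm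
    rw [hswap]
    have hsum_g : Summable fun k => ∑ i, g i k :=
      Summable.of_nonneg_of_le (fun k => Finset.sum_nonneg fun i _ => hg0 i k)
        (fun k => hg_le k) hbnd_sum
    calc ∑' k, ∑ i, g i k ≤ ∑' k, bnd k := Summable.tsum_le_tsum hg_le hsum_g hbnd_sum
      _ = v / 2 * lam ^ 2 * (1 - lam * c)⁻¹ := by
          rw [hbnd_def]
          rw [tsum_mul_left, tsum_geometric_of_lt_one hlamc0 hlamc]
      _ = v / 2 * lam ^ 2 * (1 + c * s) := by
          congr 1
          have h1 : 1 - lam * c = 1 / (1 + c * s) := by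
            rw [hlam_def]; field_simp; ring
          rw [h1, one_div, inv_inv]
  have hmgfS : mgf (∑ i, Y i) μ lam ≤ Real.exp (v / 2 * lam ^ 2 * (1 + c * s)) := by
    rw [hYindep.mgf_sum hYmeas]
    calc ∏ i, mgf (Y i) μ lam ≤ ∏ i, Real.exp (R i) :=
          Finset.prod_le_prod (fun i _ => mgf_nonneg) fun i _ => hmgf i
      _ = Real.exp (∑ i, R i) := (Real.exp_sum _ _).symm
      _ ≤ _ := Real.exp_le_exp.mpr hRsum
  -- Chernoff
  set ε : ℝ := v * s + c * t with hε_def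
  have hcher := measure_ge_le_exp_mul_mgf (μ := μ) (X := ∑ i, Y i) ε hlam0 hSexp
  have hkey : Real.exp (-lam * ε) * Real.exp (v / 2 * lam ^ 2 * (1 + c * s))
      = Real.exp (-t) := by
    rw [← Real.exp_add]
    congr 1
    rw [hlam_def, hε_def]
    exact bern_alg v c t s hs2 hD
  have hbound : (μ {ω | ε ≤ (∑ i, Y i) ω}).toReal ≤ Real.exp (-t) := by
    calc (μ {ω | ε ≤ (∑ i, Y i) ω}).toReal
        ≤ Real.exp (-lam * ε) * mgf (∑ i, Y i) μ lam := hcher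
      _ ≤ Real.exp (-lam * ε) * Real.exp (v / 2 * lam ^ 2 * (1 + c * s)) :=
          mul_le_mul_of_nonneg_left hmgfS (Real.exp_pos _).le
      _ = Real.exp (-t) := hkey
  have hset : {ω | Real.sqrt (2 * v * t) + c * t ≤ ∑ i, (Z i ω - ∫ ω', Z i ω' ∂μ)}
      = {ω | ε ≤ (∑ i, Y i) ω} := by
    have hvs : Real.sqrt (2 * v * t) = v * s := by
      rw [hs_def, show 2 * v * t = v ^ 2 * (2 * t / v) by field_simp,
        Real.sqrt_mul (sq_nonneg v), Real.sqrt_sq hv.le]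
    ext ω
    simp only [Set.mem_setOf_eq, hε_def, hvs, Finset.sum_apply, hY_def]
  rw [hset]
  calc μ {ω | ε ≤ (∑ i, Y i) ω}
      = ENNReal.ofReal (μ {ω | ε ≤ (∑ i, Y i) ω}).toReal :=
        (ENNReal.ofReal_toReal (measure_ne_top μ _)).symm
    _ ≤ ENNReal.ofReal (Real.exp (-t)) := ENNReal.ofReal_le_ofReal hbound

theorem bernstein_two_sided {Ω : Type*} [MeasurableSpace Ω]
    (μ : Measure Ω) [IsProbabilityMeasure μ] (n : ℕ) (Z : Fin n → Ω → ℝ)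
    (hmeas : ∀ i, Measurable (Z i))
    (hindep : iIndepFun Z μ)
    (hint : ∀ i k, Integrable (fun ω => |Z i ω| ^ k) μ)
    (v c : ℝ) (hv : 0 < v) (hc : 0 < c)
    (hv2 : ∑ i, ∫ ω, (Z i ω) ^ 2 ∂μ ≤ v)
    (hmom : ∀ k : ℕ, 3 ≤ k →
      ∑ i, ∫ ω, |Z i ω| ^ k ∂μ ≤ (Nat.factorial k : ℝ) / 2 * v * c ^ (k - 2))
    (t : ℝ) (ht : 0 ≤ t) :
    μ {ω | Real.sqrt (2 * v * t) + c * t ≤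
        |∑ i, (Z i ω - ∫ ω', Z i ω' ∂μ)|} ≤
      ENNReal.ofReal (2 * Real.exp (-t)) := by
  set ε : ℝ := Real.sqrt (2 * v * t) + c * t with hε_def
  have h1 := bernstein_one_sided μ n Z hmeas hindep hint v c hv hc hv2 hmom t ht
  have h2 := bernstein_one_sided μ n (fun i ω => -(Z i ω)) (fun i => (hmeas i).neg)
    (hindep.comp (fun i (x : ℝ) => -x) fun i => measurable_neg)
    (fun i k => by simpa [abs_neg] using hint i k) v c hv hc
    (by simpa only [neg_sq] using hv2)
    (fun k hk => by simpa only [abs_neg] using hmom k hk) t ht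
  have hneg : ∀ ω, ∑ i, (-(Z i ω) - ∫ ω', -(Z i ω') ∂μ)
      = -(∑ i, (Z i ω - ∫ ω', Z i ω' ∂μ)) := by
    intro ω
    rw [← Finset.sum_neg_distrib]
    refine Finset.sum_congr rfl fun i _ => ?_
    rw [integral_neg]; ring
  have h2' : μ {ω | ε ≤ -(∑ i, (Z i ω - ∫ ω', Z i ω' ∂μ))} ≤
      ENNReal.ofReal (Real.exp (-t)) := by
    have : {ω | ε ≤ ∑ i, (-(Z i ω) - ∫ ω', -(Z i ω') ∂μ)}
        = {ω | ε ≤ -(∑ i, (Z i ω - ∫ ω', Z i ω' ∂μ))} := by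
      ext ω; simp only [Set.mem_setOf_eq, hneg ω]
    rw [← this]
    exact h2
  have hsub : {ω | ε ≤ |∑ i, (Z i ω - ∫ ω', Z i ω' ∂μ)|} ⊆
      {ω | ε ≤ ∑ i, (Z i ω - ∫ ω', Z i ω' ∂μ)} ∪
      {ω | ε ≤ -(∑ i, (Z i ω - ∫ ω', Z i ω' ∂μ))} := by
    intro ω hω
    simp only [Set.mem_setOf_eq] at hω
    rcases le_abs.mp hω with h | h
    · exact Or.inl h
    · exact Or.inr h
  calc μ {ω | ε ≤ |∑ i, (Z i ω - ∫ ω', Z i ω' ∂μ)|}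
      ≤ μ ({ω | ε ≤ ∑ i, (Z i ω - ∫ ω', Z i ω' ∂μ)} ∪
        {ω | ε ≤ -(∑ i, (Z i ω - ∫ ω', Z i ω' ∂μ))}) := measure_mono hsub
    _ ≤ μ {ω | ε ≤ ∑ i, (Z i ω - ∫ ω', Z i ω' ∂μ)} +
        μ {ω | ε ≤ -(∑ i, (Z i ω - ∫ ω', Z i ω' ∂μ))} := measure_union_le _ _
    _ ≤ ENNReal.ofReal (Real.exp (-t)) + ENNReal.ofReal (Real.exp (-t)) := add_le_add h1 h2'
    _ = ENNReal.ofReal (2 * Real.exp (-t)) := by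
        rw [← ENNReal.ofReal_add (Real.exp_pos _).le (Real.exp_pos _).le]
        ring_nf
end
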